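/- Two symbols Λ₁ and Λ₂ are equivalent under the shift-generated equivalence relation if and only if Υ(Λ₁) = Υ(Λ₂) and def(Λ₁) = def(Λ₂), where Υ sends a symbol to its associated bi-partition. -/

import Mathlib

/-- The rank of a symbol `Λ = (A, B)`:
`rk(Λ) = Σ_{a∈A} a + Σ_{b∈B} b − ⌊((|A|+|B|−1)²)/4⌋`. -/
def srank (Λ : Finset ℕ × Finset ℕ) : ℤ :=
  (∑ a ∈ Λ.1, (a : ℤ)) + (∑ b ∈ Λ.2, (b : ℤ)) -
    ((Λ.1.card + Λ.2.card : ℤ) - 1) ^ 2 / 4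

/-- The defect of a symbol `Λ = (A, B)`: `def(Λ) = |A| − |B|`. -/
def sdefect (Λ : Finset ℕ × Finset ℕ) : ℤ :=
  (Λ.1.card : ℤ) - (Λ.2.card : ℤ)

/-- The shift of a symbol: add 1 to every entry of each row and insert 0. -/
def shiftS (Λ : Finset ℕ × Finset ℕ) : Finset ℕ × Finset ℕ :=
  (Λ.1.image (· + 1) ∪ {0}, Λ.2.image (· + 1) ∪ {0})

/-- The equivalence relation on symbols generated by the shift. -/
def sequiv : (Finset ℕ × Finset ℕ) → (Finset ℕ × Finset ℕ) → Prop :=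
  Relation.EqvGen (fun Λ Λ' => Λ' = shiftS Λ)

/-- For a β-set `A = {a₁ > a₂ > ⋯ > a_m}`, the sequence
`[a₁ − (m−1), a₂ − (m−2), …, a_m]`. -/
def upsRowFull (A : Finset ℕ) : List ℤ :=
  ((A.sort (· ≤ ·)).reverse).mapIdx fun i a => (a : ℤ) - ((A.card : ℤ) - 1 - i)

/-- The partition `Υ(A)` attached to a β-set `A`: the sequence `upsRowFull A`
with trailing zeros removed. -/
def upsRow (A : Finset ℕ) : List ℤ :=
  ((upsRowFull A).reverse.dropWhile (· == 0)).reverse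

/-- `|Υ(Λ)|`: the size of the bi-partition attached to the symbol `Λ`. -/
def upsSize (Λ : Finset ℕ × Finset ℕ) : ℤ :=
  (upsRow Λ.1).sum + (upsRow Λ.2).sum

/-- `δ(A) = a₁ − (|A| − 1)` if `A ≠ ∅` (with `a₁` the largest element), and `δ(∅) = 0`. -/
def deltaRow (A : Finset ℕ) : ℤ :=
  if h : A.Nonempty then (A.max' h : ℤ) - ((A.card : ℤ) - 1) else 0

/-- `δ(Λ) = δ(A) + δ(B)` for a symbol `Λ = (A, B)`. -/
def deltaS (Λ : Finset ℕ × Finset ℕ) : ℤ :=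
  deltaRow Λ.1 + deltaRow Λ.2

def shiftRow (A : Finset ℕ) : Finset ℕ := A.image (· + 1) ∪ {0}

lemma card_shiftRow (A : Finset ℕ) : (shiftRow A).card = A.card + 1 := by
  unfold shiftRow
  rw [Finset.card_union_of_disjoint (by simp [Finset.disjoint_left]),
    Finset.card_image_of_injective _ (add_left_injective 1), Finset.card_singleton]

lemma sort_shiftRow (A : Finset ℕ) :
    (shiftRow A).sort (· ≤ ·) = 0 :: (A.sort (· ≤ ·)).map (· + 1) := by
  refine (fun hp hs => List.Perm.eq_of_pairwise' (Finset.pairwise_sort _ _) hs hp) ?_ ?_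
  · apply List.perm_of_nodup_nodup_toFinset_eq (Finset.sort_nodup _ _)
    · refine List.nodup_cons.2 ⟨by simp, ?_⟩
      exact (Finset.sort_nodup A _).map (add_left_injective 1)
    · rw [Finset.sort_toFinset]
      unfold shiftRow
      ext x
      simp [eq_comm, Or.comm]
  · rw [List.pairwise_cons]
    refine ⟨by simp, ?_⟩
    exact List.Pairwise.map _ (fun a b h => by omega) (Finset.pairwise_sort A _)

lemma upsRowFull_eq (A : Finset ℕ) :
    upsRowFull A = ((A.sort (· ≤ ·)).reverse.map (fun a : ℕ => (a : ℤ))).mapIdx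
      (fun i a => a - ((A.card : ℤ) - 1 - i)) := by
  unfold upsRowFull
  congr 1
  induction (A.sort (· ≤ ·)).reverse with
  | nil => rfl
  | cons a t ih =>
    simp only [List.flatMap_cons, List.map_cons, List.singleton_append]
    exact congrArg _ ih

lemma length_upsRowFull (A : Finset ℕ) : (upsRowFull A).length = A.card := by
  rw [upsRowFull_eq]
  simp

lemma upsRowFull_shiftRow (A : Finset ℕ) :
    upsRowFull (shiftRow A) = upsRowFull A ++ [0] := by
  rw [upsRowFull_eq, upsRowFull_eq, sort_shiftRow, card_shiftRow]
  rw [List.reverse_cons, List.map_append, List.mapIdx_append]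
  congr 1
  · apply List.ext_getElem
    · simp
    · intro i h1 h2
      simp only [List.getElem_mapIdx, List.getElem_map, List.getElem_reverse,
        List.length_map]
      push_cast
      ring
  · simp

lemma upsRow_shiftRow (A : Finset ℕ) : upsRow (shiftRow A) = upsRow A := by
  unfold upsRow
  rw [upsRowFull_shiftRow, List.reverse_append]
  simp [List.dropWhile_cons]

lemma full_decomp (A : Finset ℕ) :
    upsRowFull A = upsRow A ++
      List.replicate ((upsRowFull A).length - (upsRow A).length) 0 := by
  have hrep : (upsRowFull A).reverse.takeWhile (· == 0) =
      List.replicate (((upsRowFull A).reverse.takeWhile (· == 0)).length) 0 := by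
    apply List.eq_replicate_of_mem
    intro b hb
    simpa using List.mem_takeWhile_imp hb
  have hlen : (((upsRowFull A).reverse.takeWhile (· == 0)).length) +
      (((upsRowFull A).reverse.dropWhile (· == 0)).length) = (upsRowFull A).length := by
    rw [← List.length_append, List.takeWhile_append_dropWhile, List.length_reverse]
  conv_lhs => rw [← (upsRowFull A).reverse_reverse,
    ← List.takeWhile_append_dropWhile (p := (· == 0)) (l := (upsRowFull A).reverse)]
  rw [List.reverse_append]
  unfold upsRow
  congr 1
  rw [hrep, List.reverse_replicate]
  congr 1
  simp only [List.length_reverse]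
  omega

lemma row_eq_of_full_eq {A B : Finset ℕ} (hc : A.card = B.card)
    (h : upsRowFull A = upsRowFull B) : A = B := by
  have hls : (A.sort (· ≤ ·)).length = (B.sort (· ≤ ·)).length := by
    simp [hc]
  have hs : (A.sort (· ≤ ·)).reverse = (B.sort (· ≤ ·)).reverse := by
    apply List.ext_getElem (by simp [hls])
    intro i h1 h2
    have h1' : i < (upsRowFull A).length := by
      rw [length_upsRowFull]; simpa using h1
    have h2' : i < (upsRowFull B).length := by
      rw [length_upsRowFull]; simpa using h2
    have this := List.getElem_of_eq h h1'
    simp only [upsRowFull_eq, List.getElem_mapIdx, List.getElem_map] at this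
    have : ((A.sort (· ≤ ·)).reverse[i]'h1 : ℤ) = ((B.sort (· ≤ ·)).reverse[i]'h2 : ℤ) := by
      omega
    exact_mod_cast this
  have : A.sort (· ≤ ·) = B.sort (· ≤ ·) := by
    rw [← (A.sort (· ≤ ·)).reverse_reverse, hs, List.reverse_reverse]
  calc A = (A.sort (· ≤ ·)).toFinset := (Finset.sort_toFinset _ _).symm
    _ = (B.sort (· ≤ ·)).toFinset := by rw [this]
    _ = B := Finset.sort_toFinset _ _

lemma row_eq_of_upsRow_eq {A B : Finset ℕ} (hc : A.card = B.card)
    (h : upsRow A = upsRow B) : A = B := by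
  apply row_eq_of_full_eq hc
  have hlen : (upsRowFull A).length = (upsRowFull B).length := by
    rw [length_upsRowFull, length_upsRowFull, hc]
  rw [full_decomp A, full_decomp B, h, hlen]


lemma shiftS_eq (Λ : Finset ℕ × Finset ℕ) : shiftS Λ = (shiftRow Λ.1, shiftRow Λ.2) := rfl

lemma iterate_shiftS (Λ : Finset ℕ × Finset ℕ) (k : ℕ) :
    shiftS^[k] Λ = (shiftRow^[k] Λ.1, shiftRow^[k] Λ.2) := by
  induction k with
  | zero => rfl
  | succ n ih => rw [Function.iterate_succ_apply', Function.iterate_succ_apply',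
      Function.iterate_succ_apply', ih, shiftS_eq]

lemma card_iterate_shiftRow (A : Finset ℕ) (k : ℕ) :
    (shiftRow^[k] A).card = A.card + k := by
  induction k with
  | zero => rfl
  | succ n ih => rw [Function.iterate_succ_apply', card_shiftRow, ih]; omega

lemma upsRow_iterate_shiftRow (A : Finset ℕ) (k : ℕ) :
    upsRow (shiftRow^[k] A) = upsRow A := by
  induction k with
  | zero => rfl
  | succ n ih => rw [Function.iterate_succ_apply', upsRow_shiftRow, ih]

lemma sequiv_iterate (Λ : Finset ℕ × Finset ℕ) (k : ℕ) : sequiv Λ (shiftS^[k] Λ) := by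
  induction k with
  | zero => exact Relation.EqvGen.refl Λ
  | succ n ih =>
    rw [Function.iterate_succ_apply']
    exact Relation.EqvGen.trans _ _ _ ih (Relation.EqvGen.rel _ _ rfl)

lemma sequiv_helper (Λ₁ Λ₂ : Finset ℕ × Finset ℕ)
    (h1 : upsRow Λ₁.1 = upsRow Λ₂.1) (h2 : upsRow Λ₁.2 = upsRow Λ₂.2)
    (hd : sdefect Λ₁ = sdefect Λ₂) (hle : Λ₁.1.card ≤ Λ₂.1.card) :
    sequiv Λ₁ Λ₂ := by
  set k := Λ₂.1.card - Λ₁.1.card with hk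
  have hd' : Λ₁.2.card + k = Λ₂.2.card := by
    unfold sdefect at hd
    omega
  have hΛ : shiftS^[k] Λ₁ = Λ₂ := by
    rw [iterate_shiftS]
    have e1 : shiftRow^[k] Λ₁.1 = Λ₂.1 := by
      apply row_eq_of_upsRow_eq
      · rw [card_iterate_shiftRow]; omega
      · rw [upsRow_iterate_shiftRow, h1]
    have e2 : shiftRow^[k] Λ₁.2 = Λ₂.2 := by
      apply row_eq_of_upsRow_eq
      · rw [card_iterate_shiftRow]; omega
      · rw [upsRow_iterate_shiftRow, h2]
    rw [e1, e2]
  rw [← hΛ]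
  exact sequiv_iterate Λ₁ k

/-- Two symbols are equivalent under the shift-generated equivalence relation
if and only if they have the same bi-partition `Υ` and the same defect. -/
theorem sequiv_iff_ups_and_defect_eq (Λ₁ Λ₂ : Finset ℕ × Finset ℕ) :
    sequiv Λ₁ Λ₂ ↔
      upsRow Λ₁.1 = upsRow Λ₂.1 ∧ upsRow Λ₁.2 = upsRow Λ₂.2 ∧
        sdefect Λ₁ = sdefect Λ₂ := by
  constructor
  · intro h
    induction h with
    | rel Λ Λ' hr =>
      subst hr
      rw [shiftS_eq]
      refine ⟨(upsRow_shiftRow _).symm, (upsRow_shiftRow _).symm, ?_⟩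
      unfold sdefect
      simp [shiftS_eq, card_shiftRow]
    | refl Λ => exact ⟨rfl, rfl, rfl⟩
    | symm _ _ _ ih => exact ⟨ih.1.symm, ih.2.1.symm, ih.2.2.symm⟩
    | trans _ _ _ _ _ ih₁ ih₂ =>
      exact ⟨ih₁.1.trans ih₂.1, ih₁.2.1.trans ih₂.2.1, ih₁.2.2.trans ih₂.2.2⟩
  · rintro ⟨h1, h2, hd⟩
    rcases le_total Λ₁.1.card Λ₂.1.card with hle | hle
    · exact sequiv_helper Λ₁ Λ₂ h1 h2 hd hle
    · exact Relation.EqvGen.symm _ _ (sequiv_helper Λ₂ Λ₁ h1.symm h2.symm hd.symm hle)
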